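/- Let C ⊆ ℝⁿ be a polytope and f : C → ℝ convex and differentiable on an open set containing C. For every x ∈ C \ X*, max_{v ∈ C} ⟨∇f(x), x - v⟩ ≥ (f(x) - f*)/r(X*, x), where r is the radial distance r(y, x) = min{ρ ≥ 0 : y - x = ρ(v - x) for some v ∈ C} and r(X*, x) = min_{x* ∈ X*} r(x*, x). -/

import Mathlib

/-- The radial distance on a polytope `C`:
`r(y, x) = min {ρ ≥ 0 : y - x = ρ (v - x) for some v ∈ C}`. -/
noncomputable def radialDist {E : Type*} [NormedAddCommGroup E] [NormedSpace ℝ E]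
    (C : Set E) (y x : E) : ℝ :=
  sInf {ρ : ℝ | 0 ≤ ρ ∧ ∃ v ∈ C, y - x = ρ • (v - x)}

/-- Gradient inequality for convex differentiable functions. -/
lemma grad_ineq_aux {E : Type*} [NormedAddCommGroup E] [NormedSpace ℝ E]
    {C : Set E} {f : E → ℝ} {f' : E →L[ℝ] ℝ} {x z : E}
    (hconv : ConvexOn ℝ C f) (hx : x ∈ C) (hz : z ∈ C)
    (hd : HasFDerivAt f f' x) :
    f x + f' (z - x) ≤ f z := by
  set g : ℝ → ℝ := fun t => f (x + t • (z - x)) with hg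
  have hpath : HasDerivAt (fun t : ℝ => x + t • (z - x)) (z - x) 0 := by
    simpa using ((hasDerivAt_id (0:ℝ)).smul_const (z - x)).const_add x
  have hgd : HasDerivAt g (f' (z - x)) 0 := by
    have h : HasFDerivAt f f' (x + (0:ℝ) • (z - x)) := by simpa using hd
    exact h.comp_hasDerivAt 0 hpath
  have hg0 : g 0 = f x := by simp [g]
  have hslope : ∀ t ∈ Set.Ioc (0:ℝ) 1, slope g 0 t ≤ f z - f x := by
    intro t ht
    have hmemeq : x + t • (z - x) = (1 - t) • x + t • z := by
      simp [smul_sub, sub_smul, one_smul]; abel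
    have hgt : g t ≤ (1 - t) * f x + t * f z := by
      have := hconv.2 hx hz (by linarith [ht.2] : (0:ℝ) ≤ 1 - t) (le_of_lt ht.1)
        (by ring)
      simpa [g, hmemeq, smul_eq_mul] using this
    have ht0 : (0:ℝ) < t := ht.1
    rw [slope_def_field, hg0, show t - 0 = t by ring, div_le_iff₀ ht0]
    nlinarith
  have h1 : Filter.Tendsto (slope g 0) (nhdsWithin 0 (Set.Ioi 0)) (nhds (f' (z - x))) := by
    have := hasDerivAt_iff_tendsto_slope.mp hgd
    exact this.mono_left (nhdsWithin_mono _ (fun t ht => (ht.ne' : t ≠ 0)))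
  have h2 : ∀ᶠ t in nhdsWithin (0:ℝ) (Set.Ioi 0), slope g 0 t ≤ f z - f x :=
    Filter.eventually_of_mem (Ioc_mem_nhdsGT_of_mem (by simp)) hslope
  have := le_of_tendsto h1 h2
  linarith

/-- Scaling lemma for the radial distance: for `x ∈ C \ X*`,
`max_{v ∈ C} ⟨∇f(x), x - v⟩ ≥ (f(x) - f*) / r(X*, x)`. -/
theorem stmt4 {E : Type*} [NormedAddCommGroup E] [NormedSpace ℝ E]
    (V : Finset E) (C : Set E) (hC : C = convexHull ℝ (V : Set E)) (hCne : C.Nonempty)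
    (f : E → ℝ) (f' : E → E →L[ℝ] ℝ) (hdiff : ∀ x ∈ C, HasFDerivAt f (f' x) x)
    (hconv : ConvexOn ℝ C f)
    (fstar : ℝ) (hfstar : IsLeast (f '' C) fstar)
    (Xstar : Set E) (hXstar : Xstar = {z ∈ C | f z = fstar}) :
    ∀ x ∈ C, x ∉ Xstar →
      sSup {t : ℝ | ∃ v ∈ C, t = f' x (x - v)} ≥
        (f x - fstar) / sInf {d : ℝ | ∃ z ∈ Xstar, d = radialDist C z x} := by
  intro x hx hxX
  set T : Set ℝ := {t : ℝ | ∃ v ∈ C, t = f' x (x - v)} with hT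
  set D : Set ℝ := {d : ℝ | ∃ z ∈ Xstar, d = radialDist C z x} with hDdef
  have hCcompact : IsCompact C := by
    rw [hC]; exact V.finite_toSet.isCompact_convexHull (𝕜 := ℝ)
  have hTbdd : BddAbove T := by
    have himg : T = (fun v => f' x (x - v)) '' C := by
      ext t
      constructor
      · rintro ⟨v, hv, rfl⟩; exact ⟨v, hv, rfl⟩
      · rintro ⟨v, hv, rfl⟩; exact ⟨v, hv, rfl⟩
    rw [himg]
    exact (hCcompact.image (by continuity)).bddAbove
  have hfx : fstar < f x := by
    refine lt_of_le_of_ne (hfstar.2 ⟨x, hx, rfl⟩) ?_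
    intro h
    exact hxX (hXstar ▸ (⟨hx, h.symm⟩ : x ∈ {z ∈ C | f z = fstar}))
  have key : ∀ z ∈ Xstar, ∀ ρ : ℝ, 0 ≤ ρ → (∃ v ∈ C, z - x = ρ • (v - x)) →
      f x - fstar ≤ ρ * sSup T := by
    rintro z hz ρ hρ ⟨v, hv, hveq⟩
    have hzmem : z ∈ C ∧ f z = fstar := by
      have := hXstar ▸ hz; exact this
    have hgi := grad_ineq_aux hconv hx hzmem.1 (hdiff x hx)
    have h2 : f' x (x - v) ≤ sSup T := le_csSup hTbdd ⟨v, hv, rfl⟩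
    have h4 : f' x (z - x) = -(ρ * f' x (x - v)) := by
      rw [hveq, show v - x = -(x - v) by abel]
      simp only [map_smul, map_neg, smul_eq_mul, map_sub]
      ring
    have hmul := mul_le_mul_of_nonneg_left h2 hρ
    have hzf := hzmem.2
    linarith
  have hXne : Xstar.Nonempty := by
    obtain ⟨z, hzC, hzf⟩ := hfstar.1
    exact ⟨z, hXstar ▸ (⟨hzC, hzf⟩ : z ∈ {z ∈ C | f z = fstar})⟩
  have hM : 0 < sSup T := by
    obtain ⟨z, hz⟩ := hXne
    have hzC : z ∈ C := by
      have := hXstar ▸ hz; exact this.1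
    have := key z hz 1 zero_le_one ⟨z, hzC, by simp⟩
    linarith
  have hDne : D.Nonempty := by
    obtain ⟨z, hz⟩ := hXne
    exact ⟨radialDist C z x, z, hz, rfl⟩
  have hD : ∀ d ∈ D, (f x - fstar) / sSup T ≤ d := by
    rintro d ⟨z, hz, rfl⟩
    have hzC : z ∈ C := by
      have := hXstar ▸ hz; exact this.1
    refine le_csInf ⟨1, zero_le_one, z, hzC, by simp⟩ ?_
    rintro ρ ⟨hρ, hv⟩
    rw [div_le_iff₀ hM]
    exact key z hz ρ hρ hv
  have hbound : (f x - fstar) / sSup T ≤ sInf D := le_csInf hDne hD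
  have hRpos : 0 < sInf D :=
    lt_of_lt_of_le (div_pos (by linarith) hM) hbound
  rw [ge_iff_le, div_le_iff₀ hRpos]
  have := (div_le_iff₀ hM).mp hbound
  nlinarith
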